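/- Fix a ≥ 1 and a weakly decreasing upper row. Let σ be a two-row array of width k whose top row is the constant sequence (a, …, a) and whose bottom row p starts with all entries < a in weakly decreasing order followed by all entries ≥ a in arbitrary order. Let w be a rearrangement of p preserving the relative order of entries ≥ a. Then the difference quinv(τ) − quinv(σ), where τ has bottom row w and the same top row, equals #{(i,j): i<j, w_j < a ≤ w_i} + #{(i,j): i<j, w_i < w_j < a}. -/

import Mathlib

/-- Queue inversion triple condition on naturals: `a` above `b`, `c` to the right of `b`. -/
abbrev qtripleN (a b c : ℕ) : Prop :=
  (a < b ∧ b < c) ∨ (b < c ∧ c < a) ∨ (c < a ∧ a < b) ∨ (a = b ∧ b ≠ c)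

/-- quinv of a two-row rectangular array of width `k` (bottom row = `bot`, top row =
`top`, a row of zeros appended above `top`). -/
def quinv2 (k : ℕ) (top bot : ℕ → ℕ) : ℕ :=
  ((Finset.range k ×ˢ Finset.range k).filter
    (fun ij => ij.1 < ij.2 ∧ qtripleN 0 (top ij.1) (top ij.2))).card
  + ((Finset.range k ×ˢ Finset.range k).filter
    (fun ij => ij.1 < ij.2 ∧ qtripleN (top ij.1) (bot ij.1) (bot ij.2))).card

/-- For a two-row array with constant top row `a`, bottom row `p` starting with all its
entries `< a` in weakly decreasing order followed by its entries `≥ a`, and `w` a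
rearrangement of `p` preserving the relative order of entries `≥ a`:
`quinv τ − quinv σ = #{i<j : w_j < a ≤ w_i} + #{i<j : w_i < w_j < a}`. -/
theorem quinv_difference_two_row
    (k a m : ℕ) (ha : 1 ≤ a) (hm : m ≤ k) (p w : ℕ → ℕ)
    (hlow : ∀ i < m, p i < a)
    (hhigh : ∀ i, m ≤ i → i < k → a ≤ p i)
    (hdec : ∀ i j, i ≤ j → j < m → p j ≤ p i)
    (e : Equiv.Perm (Fin k)) (hw : ∀ i : Fin k, w i.val = p ((e i).val))
    (hpres : ∀ i j : Fin k, i < j → a ≤ w i.val → a ≤ w j.val → e i < e j) :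
    quinv2 k (fun _ => a) w =
      quinv2 k (fun _ => a) p
      + ((Finset.range k ×ˢ Finset.range k).filter
          (fun ij => ij.1 < ij.2 ∧ w ij.2 < a ∧ a ≤ w ij.1)).card
      + ((Finset.range k ×ˢ Finset.range k).filter
          (fun ij => ij.1 < ij.2 ∧ w ij.1 < w ij.2 ∧ w ij.2 < a)).card := by
  classical
  unfold quinv2
  set S := Finset.range k ×ˢ Finset.range k with hS
  -- split the quinv predicate into three disjoint cases
  have hsplit : ∀ v : ℕ → ℕ,
      (S.filter (fun ij => ij.1 < ij.2 ∧ qtripleN a (v ij.1) (v ij.2))).card =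
      (S.filter (fun ij => ij.1 < ij.2 ∧ a ≤ v ij.1 ∧ a ≤ v ij.2 ∧ v ij.1 < v ij.2)).card
      + (S.filter (fun ij => ij.1 < ij.2 ∧ v ij.2 < a ∧ a ≤ v ij.1)).card
      + (S.filter (fun ij => ij.1 < ij.2 ∧ v ij.1 < v ij.2 ∧ v ij.2 < a)).card := by
    intro v
    simp only [Finset.card_filter]
    rw [← Finset.sum_add_distrib, ← Finset.sum_add_distrib]
    refine Finset.sum_congr rfl fun ij _ => ?_
    simp only [qtripleN]
    split_ifs <;> omega
  have hmem : ∀ ij : ℕ × ℕ, ij ∈ S ↔ ij.1 < k ∧ ij.2 < k := by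
    intro ij; simp [hS, Finset.mem_product]
  have hm1 : ∀ i, a ≤ p i → i < k → m ≤ i := by
    intro i hai hik
    by_contra h
    have := hlow i (by omega)
    omega
  have hm2 : ∀ i, p i < a → i < k → i < m := by
    intro i hpi hik
    by_contra h
    have := hhigh i (by omega) hik
    omega
  -- the two extra terms vanish for p
  have hσ2 : (S.filter (fun ij => ij.1 < ij.2 ∧ p ij.2 < a ∧ a ≤ p ij.1)).card = 0 := by
    rw [Finset.card_eq_zero, Finset.filter_eq_empty_iff]
    intro ij hij
    rw [hmem] at hij
    rintro ⟨h1, h2, h3⟩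
    have := hm1 ij.1 h3 hij.1
    have := hm2 ij.2 h2 hij.2
    omega
  have hσ3 : (S.filter (fun ij => ij.1 < ij.2 ∧ p ij.1 < p ij.2 ∧ p ij.2 < a)).card = 0 := by
    rw [Finset.card_eq_zero, Finset.filter_eq_empty_iff]
    intro ij hij
    rw [hmem] at hij
    rintro ⟨h1, h2, h3⟩
    have h4 := hm2 ij.2 h3 hij.2
    have := hdec ij.1 ij.2 (le_of_lt h1) h4
    omega
  -- auxiliary maps extending e and e.symm to ℕ
  set f : ℕ → ℕ := fun i => if h : i < k then ((e ⟨i, h⟩ : Fin k) : ℕ) else i with hf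
  set g : ℕ → ℕ := fun i => if h : i < k then ((e.symm ⟨i, h⟩ : Fin k) : ℕ) else i with hg
  have hfk : ∀ i, i < k → f i < k := by
    intro i h; simp only [hf, dif_pos h]; exact (e ⟨i, h⟩).isLt
  have hgk : ∀ i, i < k → g i < k := by
    intro i h; simp only [hg, dif_pos h]; exact (e.symm ⟨i, h⟩).isLt
  have hgf : ∀ i, i < k → g (f i) = i := by
    intro i h
    simp only [hf, hg, dif_pos h]
    rw [dif_pos ((e ⟨i, h⟩).isLt)]
    simp
  have hfg : ∀ i, i < k → f (g i) = i := by
    intro i h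
    simp only [hf, hg, dif_pos h]
    rw [dif_pos ((e.symm ⟨i, h⟩).isLt)]
    simp
  have hwp : ∀ i, (h : i < k) → w i = p (f i) := by
    intro i h
    simp only [hf, dif_pos h]
    exact hw ⟨i, h⟩
  have hpw : ∀ i, (h : i < k) → p i = w (g i) := by
    intro i h
    rw [hwp (g i) (hgk i h), hfg i h]
  have hfmono : ∀ i j, i < k → j < k → i < j → a ≤ w i → a ≤ w j → f i < f j := by
    intro i j hi hj hij hai haj
    have := hpres ⟨i, hi⟩ ⟨j, hj⟩ hij hai haj
    simp only [hf, dif_pos hi, dif_pos hj]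
    exact this
  have hgmono : ∀ i j, i < k → j < k → i < j → a ≤ p i → a ≤ p j → g i < g j := by
    intro i j hi hj hij hai haj
    rcases lt_trichotomy (g i) (g j) with h | h | h
    · exact h
    · exfalso
      have : f (g i) = f (g j) := by rw [h]
      rw [hfg i hi, hfg j hj] at this; omega
    · exfalso
      have := hfmono (g j) (g i) (hgk j hj) (hgk i hi) h
        (by rw [← hpw j hj]; exact haj) (by rw [← hpw i hi]; exact hai)
      rw [hfg i hi, hfg j hj] at this
      omega
  -- the "both high" terms agree
  have hbij : (S.filter (fun ij => ij.1 < ij.2 ∧ a ≤ w ij.1 ∧ a ≤ w ij.2 ∧ w ij.1 < w ij.2)).card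
      = (S.filter (fun ij => ij.1 < ij.2 ∧ a ≤ p ij.1 ∧ a ≤ p ij.2 ∧ p ij.1 < p ij.2)).card := by
    apply Finset.card_nbij' (fun ij => (f ij.1, f ij.2)) (fun ij => (g ij.1, g ij.2))
    · intro ij hij
      rw [Finset.mem_coe, Finset.mem_filter, hmem] at hij
      obtain ⟨⟨hik, hjk⟩, hlt, hai, haj, hval⟩ := hij
      rw [Finset.mem_coe, Finset.mem_filter, hmem]
      refine ⟨⟨hfk _ hik, hfk _ hjk⟩, hfmono _ _ hik hjk hlt hai haj, ?_, ?_, ?_⟩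
      · rw [← hwp _ hik]; exact hai
      · rw [← hwp _ hjk]; exact haj
      · rw [← hwp _ hik, ← hwp _ hjk]; exact hval
    · intro ij hij
      rw [Finset.mem_coe, Finset.mem_filter, hmem] at hij
      obtain ⟨⟨hik, hjk⟩, hlt, hai, haj, hval⟩ := hij
      rw [Finset.mem_coe, Finset.mem_filter, hmem]
      refine ⟨⟨hgk _ hik, hgk _ hjk⟩, hgmono _ _ hik hjk hlt hai haj, ?_, ?_, ?_⟩
      · rw [← hpw _ hik]; exact hai
      · rw [← hpw _ hjk]; exact haj
      · rw [← hpw _ hik, ← hpw _ hjk]; exact hval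
    · intro ij hij
      rw [Finset.mem_coe, Finset.mem_filter, hmem] at hij
      obtain ⟨⟨hik, hjk⟩, -⟩ := hij
      simp [hgf _ hik, hgf _ hjk]
    · intro ij hij
      rw [Finset.mem_coe, Finset.mem_filter, hmem] at hij
      obtain ⟨⟨hik, hjk⟩, -⟩ := hij
      simp [hfg _ hik, hfg _ hjk]
  rw [hsplit w, hsplit p, hσ2, hσ3, hbij]
  omega
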